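/- Consider the training procedure of a model f(X) = g_θ(W X) by gradient descent as follows: θ^{t+1} = θ^t − η ∇_θ ℓ(θ^t, W^t X_train) and W^{t+1} = W^t − η (∇_Z ℓ)(θ^t, W^t X_train) X_train^⊤, where ℓ(θ, Z) is a continuously differentiable loss depending on θ and the first-layer training activations (with fixed training labels absorbed into ℓ). Let W^0 be drawn from a probability measure μ on ℝ^{k×d} that is invariant under right-multiplication by every orthogonal matrix R ∈ ℝ^{d×d}, and let θ^0 be fixed. For a combined data matrix X = [X_train, X_test] ∈ ℝ^{d×(n_train+n_test)}, consider the random variable (θ^t, W^t X) (the deeper weights together with the combined train and test first-layer activations). Then for two combined datasets X, X' with X_train, X'_train of the same shape and equal combined Gram matrices X^⊤ X = X'^⊤ X', the law of (θ^t, W^t X) when training on X_train equals the law of (θ'^t, W'^t X') when training on X'_train, for every t ≥ 0. In particular, the distribution of the test predictions f^t_test = g_{θ^t}(W^t X_test) depends on the inputs only through the combined second moment matrix K = X^⊤ X and the training labels. -/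

import Mathlib

open Matrix MeasureTheory

attribute [local instance] Matrix.normedAddCommGroup Matrix.normedSpace

/-- The Borel/pi measurable-space structure on matrices, viewing a matrix as the
function type `m → n → ℝ`. -/
instance matrixMeasurableSpace (m n : Type*) : MeasurableSpace (Matrix m n ℝ) :=
  inferInstanceAs (MeasurableSpace (m → n → ℝ))

lemma exists_orthogonal_of_gram_eq {d : ℕ} {N : Type*} [Fintype N] [DecidableEq N]
    (A B : Matrix (Fin d) N ℝ) (h : Aᵀ * A = Bᵀ * B) :
    ∃ R : Matrix (Fin d) (Fin d) ℝ, Rᵀ * R = 1 ∧ B = R * A := by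
  classical
  set V := EuclideanSpace ℝ (Fin d) with hV
  let e : V ≃L[ℝ] (Fin d → ℝ) := EuclideanSpace.equiv (Fin d) ℝ
  let f : (N → ℝ) →ₗ[ℝ] V := e.symm.toLinearMap ∘ₗ A.mulVecLin
  let g : (N → ℝ) →ₗ[ℝ] V := e.symm.toLinearMap ∘ₗ B.mulVecLin
  have hfapp : ∀ c, e (f c) = A *ᵥ c := fun c => e.apply_symm_apply _
  have hgapp : ∀ c, e (g c) = B *ᵥ c := fun c => e.apply_symm_apply _
  have hinnerf : ∀ (M : Matrix (Fin d) N ℝ) (c c' : N → ℝ),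
      (inner ℝ ((e.symm.toLinearMap ∘ₗ M.mulVecLin) c)
        ((e.symm.toLinearMap ∘ₗ M.mulVecLin) c') : ℝ)
        = c ⬝ᵥ ((Mᵀ * M) *ᵥ c') := by
    intro M c c'
    rw [← Matrix.mulVec_mulVec, Matrix.dotProduct_mulVec, Matrix.vecMul_transpose]
    simp only [LinearMap.comp_apply, Matrix.mulVecLin_apply, LinearEquiv.coe_toLinearMap]
    simp only [PiLp.inner_apply, RCLike.inner_apply, conj_trivial, dotProduct]
    simp [V, e, PiLp.inner_apply, mul_comm]
  have hinner : ∀ c c', (inner ℝ (f c) (f c') : ℝ) = inner ℝ (g c) (g c') := by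
    intro c c'
    rw [show (inner ℝ (f c) (f c') : ℝ) = c ⬝ᵥ ((Aᵀ * A) *ᵥ c') from hinnerf A c c',
      show (inner ℝ (g c) (g c') : ℝ) = c ⬝ᵥ ((Bᵀ * B) *ᵥ c') from hinnerf B c c', h]
  have hnorm : ∀ c, ‖f c‖ = ‖g c‖ := by
    intro c
    have h2 := hinner c c
    rw [real_inner_self_eq_norm_sq, real_inner_self_eq_norm_sq] at h2
    nlinarith [norm_nonneg (f c), norm_nonneg (g c)]
  have hker : LinearMap.ker f ≤ LinearMap.ker g := by
    intro c hc
    rw [LinearMap.mem_ker] at hc ⊢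
    have := hnorm c
    rw [hc, norm_zero] at this
    exact norm_eq_zero.mp this.symm
  let L0 : LinearMap.range f →ₗ[ℝ] V :=
    ((LinearMap.ker f).liftQ g hker) ∘ₗ f.quotKerEquivRange.symm.toLinearMap
  have hL0 : ∀ c : N → ℝ, L0 ⟨f c, LinearMap.mem_range_self f c⟩ = g c := by
    intro c
    have h1 : f.quotKerEquivRange.symm ⟨f c, LinearMap.mem_range_self f c⟩
        = Submodule.Quotient.mk c := f.quotKerEquivRange_symm_apply_image c _
    simp only [L0, LinearMap.comp_apply, LinearEquiv.coe_toLinearMap, h1]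
    exact Submodule.liftQ_apply _ _ _
  have hL0norm : ∀ x : LinearMap.range f, ‖L0 x‖ = ‖x‖ := by
    rintro ⟨x, c, rfl⟩
    rw [hL0 c]
    have : ‖(⟨f c, LinearMap.mem_range_self f c⟩ : LinearMap.range f)‖ = ‖f c‖ := rfl
    rw [this, hnorm c]
  let L : LinearMap.range f →ₗᵢ[ℝ] V := ⟨L0, hL0norm⟩
  let T : V →ₗᵢ[ℝ] V := L.extend
  have hT : ∀ c : N → ℝ, T (f c) = g c := by
    intro c
    have := L.extend_apply ⟨f c, LinearMap.mem_range_self f c⟩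
    rw [this]
    exact hL0 c
  let R : Matrix (Fin d) (Fin d) ℝ :=
    LinearMap.toMatrix' (e.toLinearMap ∘ₗ T.toLinearMap ∘ₗ e.symm.toLinearMap)
  have hR : ∀ v : Fin d → ℝ, R *ᵥ v = e (T (e.symm v)) := by
    intro v
    have := Matrix.toLin'_toMatrix' (e.toLinearMap ∘ₗ T.toLinearMap ∘ₗ e.symm.toLinearMap)
    calc R *ᵥ v = Matrix.toLin' R v := by rw [Matrix.toLin'_apply]
    _ = e (T (e.symm v)) := by rw [this]; rfl
  have hBA : ∀ c : N → ℝ, (R * A) *ᵥ c = B *ᵥ c := by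
    intro c
    rw [← Matrix.mulVec_mulVec, hR]
    have : e.symm (A *ᵥ c) = f c := rfl
    rw [this, hT, hgapp]
  have hRA : B = R * A := by
    ext i j
    have := congrFun (hBA (Pi.single j 1)) i
    simp only [Matrix.mulVec_single_one] at this
    exact this.symm
  refine ⟨R, ?_, hRA⟩
  ext i j
  have hcol : ∀ j, (fun l => R l j) = R *ᵥ Pi.single j 1 := by
    intro j; ext l; simp [Matrix.mulVec_single]
  have key : (fun l => R l i) ⬝ᵥ (fun l => R l j) = Pi.single i 1 ⬝ᵥ Pi.single j 1 := by
    rw [hcol i, hcol j, hR, hR]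
    have hio : ∀ x y : V, (e x) ⬝ᵥ (e y) = inner ℝ x y := by
      intro x y
      simp only [PiLp.inner_apply, RCLike.inner_apply, conj_trivial, dotProduct]
      simp [V, e, PiLp.inner_apply, mul_comm]
    rw [hio, T.inner_map_map, ← hio]
    simp [e]
  have lhs : (Rᵀ * R) i j = (fun l => R l i) ⬝ᵥ (fun l => R l j) := by
    simp [Matrix.mul_apply, dotProduct, Matrix.transpose_apply]
  rw [lhs, key]
  by_cases hij : i = j
  · simp [hij, Matrix.one_apply, Pi.single_apply, dotProduct]
  · simp [hij, Ne.symm hij, Matrix.one_apply, Pi.single_apply, dotProduct]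

lemma map_comp_eq_of_invol {α β : Type*} [MeasurableSpace α] [MeasurableSpace β]
    (μ : Measure α) (h h' : α → α) (hm : Measurable h) (hm' : Measurable h')
    (hli : ∀ x, h' (h x) = x) (hri : ∀ x, h (h' x) = x)
    (hμ : μ.map h = μ) (f : α → β) : μ.map (f ∘ h) = μ.map f := by
  have hμ' : μ.map h' = μ := by
    conv_lhs => rw [← hμ]
    rw [Measure.map_map hm' hm]
    have : h' ∘ h = id := funext hli
    rw [this, Measure.map_id]
  by_cases hf : AEMeasurable f μ
  · have hf2 : AEMeasurable f (μ.map h) := hμ.symm ▸ hf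
    rw [← AEMeasurable.map_map_of_aemeasurable hf2 hm.aemeasurable, hμ]
  · have hfh : ¬ AEMeasurable (f ∘ h) μ := by
      intro hc
      apply hf
      have h1 : AEMeasurable (f ∘ h) (μ.map h') := hμ'.symm ▸ hc
      have h2 : AEMeasurable ((f ∘ h) ∘ h') μ := h1.comp_aemeasurable hm'.aemeasurable
      have : (f ∘ h) ∘ h' = f := by funext x; simp [Function.comp, hri]
      rwa [this] at h2
    rw [Measure.map_of_not_aemeasurable hfh, Measure.map_of_not_aemeasurable hf]

lemma measurable_mul_right {k d : ℕ} (C : Matrix (Fin d) (Fin d) ℝ) :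
    Measurable (fun W : Matrix (Fin k) (Fin d) ℝ => W * C) := by
  apply measurable_pi_lambda
  intro i
  apply measurable_pi_lambda
  intro j
  simp only [Matrix.mul_apply]
  exact Finset.measurable_sum _ fun l _ =>
    ((measurable_pi_apply l).comp (measurable_pi_apply i)).mul_const _

theorem law_of_training_trajectory_depends_only_on_combined_gram
    (d n m k p q : ℕ) (η : ℝ) (hη : 0 < η)
    (μ : Measure (Matrix (Fin k) (Fin d) ℝ)) [IsProbabilityMeasure μ]
    (hiso : ∀ R : Matrix (Fin d) (Fin d) ℝ, Rᵀ * R = 1 →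
      μ.map (fun W => W * R) = μ)
    (θ0 : Fin p → ℝ)
    (ℓ : (Fin p → ℝ) → Matrix (Fin k) (Fin n) ℝ → ℝ)
    (hdiff : ∀ θ Z, Differentiable ℝ (fun θ' => ℓ θ' Z) ∧
      Differentiable ℝ (fun Z' => ℓ θ Z'))
    -- `Dθ θ Z` is the gradient of `ℓ (·, Z)` at `θ` w.r.t. the Euclidean inner product
    (Dθ : (Fin p → ℝ) → Matrix (Fin k) (Fin n) ℝ → (Fin p → ℝ))
    (hDθ : ∀ θ Z v, fderiv ℝ (fun θ' => ℓ θ' Z) θ v = Dθ θ Z ⬝ᵥ v)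
    -- `DZ θ Z` is the gradient of `ℓ (θ, ·)` at `Z` w.r.t. the Frobenius inner product
    (DZ : (Fin p → ℝ) → Matrix (Fin k) (Fin n) ℝ → Matrix (Fin k) (Fin n) ℝ)
    (hDZ : ∀ θ Z H, fderiv ℝ (fun Z' => ℓ θ Z') Z H = ((DZ θ Z)ᵀ * H).trace)
    -- the two combined datasets (train and test blocks)
    (Xtr Xtr' : Matrix (Fin d) (Fin n) ℝ)
    (Xte Xte' : Matrix (Fin d) (Fin m) ℝ)
    -- equal combined Gram matrices
    (hGram : (fromCols Xtr Xte)ᵀ * fromCols Xtr Xte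
           = (fromCols Xtr' Xte')ᵀ * fromCols Xtr' Xte')
    -- the two gradient-descent trajectories, as functions of the random initialization
    (Θ Θ' : ℕ → Matrix (Fin k) (Fin d) ℝ → (Fin p → ℝ))
    (Wf Wf' : ℕ → Matrix (Fin k) (Fin d) ℝ → Matrix (Fin k) (Fin d) ℝ)
    (hΘ0 : ∀ W0, Θ 0 W0 = θ0) (hWf0 : ∀ W0, Wf 0 W0 = W0)
    (hΘ0' : ∀ W0, Θ' 0 W0 = θ0) (hWf0' : ∀ W0, Wf' 0 W0 = W0)
    (hΘ : ∀ t W0, Θ (t + 1) W0 = Θ t W0 - η • Dθ (Θ t W0) (Wf t W0 * Xtr))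
    (hWf : ∀ t W0, Wf (t + 1) W0
      = Wf t W0 - η • (DZ (Θ t W0) (Wf t W0 * Xtr) * Xtrᵀ))
    (hΘ' : ∀ t W0, Θ' (t + 1) W0 = Θ' t W0 - η • Dθ (Θ' t W0) (Wf' t W0 * Xtr'))
    (hWf' : ∀ t W0, Wf' (t + 1) W0
      = Wf' t W0 - η • (DZ (Θ' t W0) (Wf' t W0 * Xtr') * Xtr'ᵀ))
    -- the readout map producing the (test) predictions
    (g : (Fin p → ℝ) → Matrix (Fin k) (Fin m) ℝ → Matrix (Fin q) (Fin m) ℝ) :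
    ∀ t : ℕ,
      μ.map (fun W0 => (Θ t W0, Wf t W0 * fromCols Xtr Xte))
        = μ.map (fun W0 => (Θ' t W0, Wf' t W0 * fromCols Xtr' Xte')) ∧
      μ.map (fun W0 => g (Θ t W0) (Wf t W0 * Xte))
        = μ.map (fun W0 => g (Θ' t W0) (Wf' t W0 * Xte')) := by
  obtain ⟨R, hRo, hX'⟩ := exists_orthogonal_of_gram_eq _ _ hGram
  have hRRT : R * Rᵀ = 1 := mul_eq_one_comm.mp hRo
  have h2 := hX'
  rw [Matrix.mul_fromCols] at h2
  obtain ⟨hXtr'', hXte''⟩ := Matrix.fromCols_inj h2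
  have key : ∀ t W0, Θ' t (W0 * Rᵀ) = Θ t W0 ∧ Wf' t (W0 * Rᵀ) = Wf t W0 * Rᵀ := by
    intro t
    induction t with
    | zero => intro W0; exact ⟨by rw [hΘ0', hΘ0], by rw [hWf0', hWf0]⟩
    | succ t ih =>
      intro W0
      obtain ⟨ihθ, ihW⟩ := ih W0
      have hZ : Wf' t (W0 * Rᵀ) * Xtr' = Wf t W0 * Xtr := by
        rw [ihW, hXtr'', Matrix.mul_assoc, ← Matrix.mul_assoc Rᵀ R Xtr, hRo, Matrix.one_mul]
      refine ⟨?_, ?_⟩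
      · rw [hΘ', hZ, ihθ, hΘ]
      · rw [hWf', hZ, ihθ, ihW, hWf, hXtr'', Matrix.transpose_mul, Matrix.sub_mul,
          Matrix.smul_mul, Matrix.mul_assoc]
  have hmap : μ.map (fun W => W * Rᵀ) = μ :=
    hiso Rᵀ (by rw [Matrix.transpose_transpose]; exact hRRT)
  have hinv1 : ∀ W : Matrix (Fin k) (Fin d) ℝ, (W * Rᵀ) * R = W := fun W => by
    rw [Matrix.mul_assoc, hRo, Matrix.mul_one]
  have hinv2 : ∀ W : Matrix (Fin k) (Fin d) ℝ, (W * R) * Rᵀ = W := fun W => by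
    rw [Matrix.mul_assoc, hRRT, Matrix.mul_one]
  have hWact : ∀ t W0, Wf' t (W0 * Rᵀ) * fromCols Xtr' Xte'
      = Wf t W0 * fromCols Xtr Xte := by
    intro t W0
    rw [(key t W0).2, hX', Matrix.mul_assoc, ← Matrix.mul_assoc Rᵀ R _, hRo, Matrix.one_mul]
  have hWte : ∀ t W0, Wf' t (W0 * Rᵀ) * Xte' = Wf t W0 * Xte := by
    intro t W0
    rw [(key t W0).2, hXte'', Matrix.mul_assoc, ← Matrix.mul_assoc Rᵀ R _, hRo, Matrix.one_mul]
  intro t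
  constructor
  · have heq := map_comp_eq_of_invol μ (fun W => W * Rᵀ) (fun W => W * R)
      (measurable_mul_right Rᵀ) (measurable_mul_right R) hinv1 hinv2 hmap
      (fun W0 => (Θ' t W0, Wf' t W0 * fromCols Xtr' Xte'))
    rw [← heq]
    congr 1
    funext W0
    simp only [Function.comp]
    rw [(key t W0).1, hWact t W0]
  · have heq := map_comp_eq_of_invol μ (fun W => W * Rᵀ) (fun W => W * R)
      (measurable_mul_right Rᵀ) (measurable_mul_right R) hinv1 hinv2 hmap
      (fun W0 => g (Θ' t W0) (Wf' t W0 * Xte'))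
    rw [← heq]
    congr 1
    funext W0
    simp only [Function.comp]
    rw [(key t W0).1, hWte t W0]
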